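/- Let r ≥ 1 and let n₁, …, n_r be integers with n_i ≥ 2 for each i, and set N = n₁ + ⋯ + n_r − r. Then there exists an r-edge-coloring of the complete bipartite graph K_{N,N} such that for every i with 1 ≤ i ≤ r, the subgraph formed by the edges of color i contains no cycle C_{2n_i}. Consequently, br(C_{2n₁}, C_{2n₂}, …, C_{2n_r}) ≥ n₁ + ⋯ + n_r − r + 1. -/

import Mathlib

/-- The spanning subgraph of `G` consisting of the edges with color `i`,
given an edge coloring `χ` (on pairs of vertices) with `r` colors. -/
def colorSubgraph {V : Type*} {r : ℕ} (G : SimpleGraph V) (χ : Sym2 V → Fin r) (i : Fin r) :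
    SimpleGraph V where
  Adj u v := G.Adj u v ∧ χ s(u, v) = i
  symm := ⟨fun u v h => ⟨h.1.symm, by rw [Sym2.eq_swap]; exact h.2⟩⟩
  loopless := ⟨fun u h => G.irrefl h.1⟩

/-- `G` contains a cycle of length `m` (on `m` vertices) as a subgraph. -/
def HasCycleLength {V : Type*} (G : SimpleGraph V) (m : ℕ) : Prop :=
  ∃ (v : V) (w : G.Walk v v), w.IsCycle ∧ w.length = m

/-- The bipartite Ramsey number of cycles `C_{m 0}, …, C_{m (r-1)}`: the least `N` such
that every `r`-edge-coloring of `K_{N,N}` contains, for some color `i`, a cycle of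
length `m i` all of whose edges have color `i`. -/
noncomputable def brCycles (r : ℕ) (m : Fin r → ℕ) : ℕ :=
  sInf {N : ℕ | ∀ χ : Sym2 (Fin N ⊕ Fin N) → Fin r,
    ∃ i : Fin r,
      HasCycleLength (colorSubgraph (completeBipartiteGraph (Fin N) (Fin N)) χ i) (m i)}


open List in
def chainWalk {V : Type*} (G : SimpleGraph V) (f : ℕ → V) :
    (j : ℕ) → (∀ k, k < j → G.Adj (f k) (f (k+1))) → G.Walk (f 0) (f j)
  | 0, _ => .nil
  | j+1, h => (chainWalk G f j (fun k hk => h k (Nat.lt_succ_of_lt hk))).concat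
      (h j (Nat.lt_succ_self j))

@[simp] lemma chainWalk_length {V : Type*} {G : SimpleGraph V} {f : ℕ → V} :
    ∀ (j : ℕ) (h), (chainWalk G f j h).length = j
  | 0, _ => rfl
  | j+1, h => by simp [chainWalk, chainWalk_length j]

@[simp] lemma chainWalk_support {V : Type*} {G : SimpleGraph V} {f : ℕ → V} :
    ∀ (j : ℕ) (h), (chainWalk G f j h).support = (List.range (j+1)).map f
  | 0, _ => rfl
  | j+1, h => by
      simp [chainWalk, chainWalk_support j, List.range_succ]

@[simp] lemma chainWalk_edges {V : Type*} {G : SimpleGraph V} {f : ℕ → V} :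
    ∀ (j : ℕ) (h), (chainWalk G f j h).edges = (List.range j).map (fun k => s(f k, f (k+1)))
  | 0, _ => rfl
  | j+1, h => by
      simp [chainWalk, chainWalk_edges j, List.range_succ]

lemma cycle_of_fn {V : Type*} {G : SimpleGraph V} {m : ℕ} (hm : 2 ≤ m) (f : ℕ → V)
    (hinj : ∀ a < 2*m, ∀ b < 2*m, f a = f b → a = b)
    (hadj : ∀ k, k + 1 < 2*m → G.Adj (f k) (f (k+1)))
    (hlast : G.Adj (f (2*m-1)) (f 0)) :
    ∃ w : G.Walk (f 0) (f 0), w.IsCycle ∧ w.length = 2*m := by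
  have h2m : 2*m - 1 + 1 = 2*m := by omega
  have hw : ∀ k, k < 2*m - 1 → G.Adj (f k) (f (k+1)) := fun k hk => hadj k (by omega)
  refine ⟨(chainWalk G f (2*m-1) hw).concat hlast, ?_, by simp; omega⟩
  have memP : ∀ p : ℕ × ℕ,
      p ∈ (List.range (2*m-1)).map (fun k => (k, k+1)) ++ [(2*m-1, 0)] →
      (p.1 < 2*m-1 ∧ p.2 = p.1+1) ∨ (p.1 = 2*m-1 ∧ p.2 = 0) := by
    rintro ⟨a, b⟩ ha
    rcases List.mem_append.1 ha with h | h
    · obtain ⟨k, hk, hk'⟩ := List.mem_map.1 h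
      obtain ⟨rfl, rfl⟩ := Prod.mk.injEq .. ▸ hk'
      exact Or.inl ⟨List.mem_range.1 hk, rfl⟩
    · simp only [List.mem_singleton, Prod.mk.injEq] at h
      exact Or.inr ⟨h.1, h.2⟩
  have pairNodup : ((List.range (2*m-1)).map (fun k => (k, k+1)) ++ [(2*m-1, 0)]).Nodup := by
    apply List.Nodup.append
    · exact List.nodup_range.map (fun x y h => by simpa using congrArg Prod.fst h)
    · exact List.nodup_singleton _
    · intro p hp hq
      simp only [List.mem_singleton] at hq
      obtain ⟨k, hk, hk'⟩ := List.mem_map.1 hp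
      rw [hq] at hk'
      have h1 := congrArg Prod.fst hk'
      have := List.mem_range.1 hk
      simp at h1; omega
  rw [SimpleGraph.Walk.isCycle_def]
  refine ⟨⟨?_⟩, ?_, ?_⟩
  · -- edges nodup
    have heq : ((chainWalk G f (2*m-1) hw).concat hlast).edges
        = ((List.range (2*m-1)).map (fun k => (k, k+1)) ++ [(2*m-1, 0)]).map
            (fun p : ℕ × ℕ => s(f p.1, f p.2)) := by
      simp [List.concat_eq_append, List.map_map, Function.comp]
    rw [heq]
    apply List.Nodup.map_on _ pairNodup
    rintro ⟨a, b⟩ ha ⟨c, d⟩ hc hfeq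
    have hab := memP _ ha
    have hcd := memP _ hc
    simp only at hab hcd
    rw [Sym2.eq_iff] at hfeq
    have key : (a = c ∧ b = d) ∨ (a = d ∧ b = c) := by
      rcases hfeq with ⟨h1, h2⟩ | ⟨h1, h2⟩
      · exact Or.inl ⟨hinj a (by omega) c (by omega) h1, hinj b (by omega) d (by omega) h2⟩
      · exact Or.inr ⟨hinj a (by omega) d (by omega) h1, hinj b (by omega) c (by omega) h2⟩
    have : a = c ∧ b = d := by omega
    simp [Prod.ext_iff, this.1, this.2]
  · -- ne nil
    intro h
    have := congrArg SimpleGraph.Walk.length h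
    simp only [SimpleGraph.Walk.length_concat, chainWalk_length,
      SimpleGraph.Walk.length_nil] at this
    omega
  · -- support tail nodup
    have heq : ((chainWalk G f (2*m-1) hw).concat hlast).support.tail
        = ((List.range (2*m-1)).map Nat.succ ++ [0]).map f := by
      simp only [SimpleGraph.Walk.support_concat, chainWalk_support, h2m,
        List.concat_eq_append]
      rw [show 2*m = (2*m-1)+1 from h2m.symm, List.range_succ_eq_map]
      simp [List.map_map, Function.comp]
    rw [heq]
    apply List.Nodup.map_on
    · intro x hx y hy hxy
      have hx' : x < 2*m := by
        rcases List.mem_append.1 hx with h | h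
        · obtain ⟨k, hk, rfl⟩ := List.mem_map.1 h; have := List.mem_range.1 hk; omega
        · simp only [List.mem_singleton] at h; omega
      have hy' : y < 2*m := by
        rcases List.mem_append.1 hy with h | h
        · obtain ⟨k, hk, rfl⟩ := List.mem_map.1 h; have := List.mem_range.1 hk; omega
        · simp only [List.mem_singleton] at h; omega
      exact hinj x hx' y hy' hxy
    · apply List.Nodup.append
      · exact List.nodup_range.map Nat.succ_injective
      · exact List.nodup_singleton _
      · intro p hp hq
        simp only [List.mem_singleton] at hq
        obtain ⟨k, hk, hk'⟩ := List.mem_map.1 hp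
        omega

lemma exists_adj_of_mem_support {V : Type*} {G : SimpleGraph V} {u v x : V}
    (w : G.Walk u v) (hx : x ∈ w.support) : x = v ∨ ∃ y, G.Adj x y := by
  induction w with
  | nil => left; simpa using hx
  | cons h p ih =>
    rw [SimpleGraph.Walk.support_cons] at hx
    rcases List.mem_cons.1 hx with rfl | hx'
    · exact Or.inr ⟨_, h⟩
    · exact ih hx'

lemma two_mul_countP_left {α β : Type*} {H : SimpleGraph (α ⊕ β)}
    (hside : ∀ x y, H.Adj x y → x.isLeft = !y.isLeft) :
    ∀ {u v : α ⊕ β} (w : H.Walk u v),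
    2 * w.support.countP (fun x => x.isLeft) =
      w.length + (if u.isLeft then 1 else 0) + (if v.isLeft then 1 else 0) := by
  intro u v w
  induction w with
  | nil =>
    rename_i z
    cases hz : z.isLeft <;> simp [hz]
  | @cons u x v h p ih =>
    rw [SimpleGraph.Walk.support_cons, List.countP_cons, SimpleGraph.Walk.length_cons]
    have hs := hside u x h
    have hsum : (if u.isLeft = true then 1 else 0) + (if x.isLeft = true then 1 else 0) = 1 := by
      cases hx' : x.isLeft <;> rw [hx'] at hs <;> simp [hs, hx']
    omega

lemma no_mono_cycle {r : ℕ} (hr : 0 < r) (n : Fin r → ℕ) (hn : ∀ i, 2 ≤ n i)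
    (M : ℕ) (b : Fin M → Fin r)
    (hb : ∀ i, (Finset.univ.filter (fun k => b k = i)).card ≤ n i - 1) :
    ∃ χ : Sym2 (Fin M ⊕ Fin M) → Fin r, ∀ i : Fin r,
      ¬ HasCycleLength (colorSubgraph (completeBipartiteGraph (Fin M) (Fin M)) χ i)
        (2 * n i) := by
  haveI : NeZero r := ⟨hr.ne'⟩
  set cval : (Fin M ⊕ Fin M) → Fin r := Sum.elim b (fun _ => 0) with hcval
  refine ⟨Sym2.lift ⟨fun u v => cval u + cval v, fun u v => add_comm _ _⟩, ?_⟩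
  set χ : Sym2 (Fin M ⊕ Fin M) → Fin r :=
    Sym2.lift ⟨fun u v => cval u + cval v, fun u v => add_comm _ _⟩ with hχ
  have hcross : ∀ (a c : Fin M), χ s(Sum.inl a, Sum.inr c) = b a := by
    intro a c; simp [hχ, hcval]
  rintro i ⟨v, w, hcyc, hlen⟩
  set H := colorSubgraph (completeBipartiteGraph (Fin M) (Fin M)) χ i with hH
  obtain ⟨x, hadj, p, rfl⟩ := SimpleGraph.Walk.not_nil_iff.1 hcyc.not_nil
  have hside : ∀ x y : Fin M ⊕ Fin M, H.Adj x y → x.isLeft = !y.isLeft := by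
    rintro x y ⟨hadj, _⟩
    rcases x with x | x <;> rcases y with y | y <;> simp_all
  -- every left vertex in the support has color i
  have hcolor : ∀ a : Fin M, Sum.inl a ∈ (SimpleGraph.Walk.cons hadj p).support → b a = i := by
    intro a ha
    have hadj' : ∃ y, H.Adj (Sum.inl a) y := by
      rcases exists_adj_of_mem_support _ ha with heq | h
      · subst heq; exact ⟨_, hadj⟩
      · exact h
    obtain ⟨y, hy, hcol⟩ := hadj'
    rcases y with y | y
    · simp at hy
    · rw [hcross a y] at hcol; exact hcol
  have hcount := two_mul_countP_left hside (SimpleGraph.Walk.cons hadj p)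
  rw [hlen, SimpleGraph.Walk.support_cons, List.countP_cons] at hcount
  have hC : p.support.countP (fun x => x.isLeft) = n i := by
    cases hu : v.isLeft <;> simp [hu] at hcount <;> omega
  have hnodup : p.support.Nodup := by
    have := hcyc.support_nodup
    simpa using this
  set lst := p.support.filter (fun x => x.isLeft) with hlst
  have hlen' : lst.length = n i := by
    rw [hlst, ← List.countP_eq_length_filter]; exact hC
  have hlstnodup : lst.Nodup := hnodup.filter _
  have hM : 0 < M := by
    have : lst ≠ [] := by
      intro h; rw [h] at hlen'; simp at hlen'; have := hn i; omega
    obtain ⟨z, hz⟩ := List.exists_mem_of_ne_nil _ this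
    have := (List.mem_filter.1 hz).2
    rcases z with z | z
    · exact z.pos
    · simp at this
  set proj : (Fin M ⊕ Fin M) → Fin M := Sum.elim id (fun _ => ⟨0, hM⟩) with hproj
  set l' := lst.map proj with hl'
  have hleft : ∀ x ∈ lst, x.isLeft = true := fun x hx => (List.mem_filter.1 hx).2
  have hl'nodup : l'.Nodup := by
    apply hlstnodup.map_on
    intro x hx y hy hxy
    rcases x with x | x
    · rcases y with y | y
      · simpa [hproj] using hxy
      · have := hleft _ hy; simp at this
    · have := hleft _ hx; simp at this
  have hl'mem : ∀ a ∈ l', b a = i := by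
    intro a ha
    obtain ⟨x, hx, rfl⟩ := List.mem_map.1 ha
    rcases x with x | x
    · have hxs : Sum.inl x ∈ (SimpleGraph.Walk.cons hadj p).support := by
        rw [SimpleGraph.Walk.support_cons]
        exact List.mem_cons_of_mem _ ((List.mem_filter.1 hx).1)
      simpa [hproj] using hcolor x hxs
    · have := hleft _ hx; simp at this
  have hsub : l'.toFinset ⊆ Finset.univ.filter (fun k => b k = i) := by
    intro a ha
    simp only [Finset.mem_filter, Finset.mem_univ, true_and]
    exact hl'mem a (List.mem_toFinset.1 ha)
  have hcard : l'.toFinset.card = n i := by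
    rw [List.toFinset_card_of_nodup hl'nodup, hl', List.length_map, hlen']
  have h1 := Finset.card_le_card hsub
  rw [hcard] at h1
  have h2 := hb i
  have h3 := hn i
  omega

lemma mono_cycle_exists {r : ℕ} (hr : 0 < r) (n : Fin r → ℕ) (hn : ∀ i, 2 ≤ n i) :
    ∃ M₀ : ℕ, ∀ χ : Sym2 (Fin M₀ ⊕ Fin M₀) → Fin r,
      ∃ i : Fin r,
        HasCycleLength (colorSubgraph (completeBipartiteGraph (Fin M₀) (Fin M₀)) χ i)
          (2 * n i) := by
  haveI : NeZero r := ⟨hr.ne'⟩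
  set t : ℕ := Finset.univ.sup n with ht
  have htn : ∀ i, n i ≤ t := fun i => Finset.le_sup (Finset.mem_univ i)
  set a : ℕ := r * t + 1 with hadef
  set M₀ : ℕ := r * 2^a * t + a with hM₀
  have ha : a ≤ M₀ := by omega
  refine ⟨M₀, ?_⟩
  intro χ
  -- step 1 : for each right vertex, a color class of size t among the first `a` left vertices
  have key : ∀ v : Fin M₀, ∃ p : Fin r × Finset (Fin a), p.2.card = t ∧
      ∀ j ∈ p.2, χ s(Sum.inl (Fin.castLE ha j), Sum.inr v) = p.1 := by
    intro v
    set φ : Fin a → Fin r := fun j => χ s(Sum.inl (Fin.castLE ha j), Sum.inr v) with hφ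
    have hcard : (Finset.univ : Finset (Fin r)).card * t < (Finset.univ : Finset (Fin a)).card := by
      simp [hadef]
    obtain ⟨c, -, hc⟩ := Finset.exists_lt_card_fiber_of_mul_lt_card_of_maps_to
      (fun x _ => Finset.mem_univ (φ x)) hcard
    obtain ⟨S, hS, hScard⟩ := Finset.exists_subset_card_eq hc.le
    refine ⟨(c, S), hScard, ?_⟩
    intro j hj
    have := hS hj
    simp only [Finset.mem_filter] at this
    exact this.2
  choose P hPcard hPcol using key
  -- step 2 : pigeonhole on the right side
  have hcard2 : (Finset.univ : Finset (Fin r × Finset (Fin a))).card * t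
      < (Finset.univ : Finset (Fin M₀)).card := by
    simp only [Finset.card_univ, Fintype.card_prod, Fintype.card_fin, Fintype.card_finset]
    have : 0 < a := by omega
    omega
  obtain ⟨⟨c, S⟩, -, hc⟩ := Finset.exists_lt_card_fiber_of_mul_lt_card_of_maps_to
    (fun x _ => Finset.mem_univ (P x)) hcard2
  set T := Finset.univ.filter (fun v : Fin M₀ => P v = (c, S)) with hT
  have hTc : t < T.card := hc
  -- S has t elements
  obtain ⟨v₀, hv₀⟩ : T.Nonempty := Finset.card_pos.1 (by omega)
  have hv₀' : P v₀ = (c, S) := (Finset.mem_filter.1 hv₀).2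
  have hScard : S.card = t := by
    have := hPcard v₀; rw [hv₀'] at this; exact this
  -- extract n c elements from each side
  have hnc2 : 2 ≤ n c := hn c
  have hnct : n c ≤ t := htn c
  obtain ⟨A, hAS, hAcard⟩ := Finset.exists_subset_card_eq (by omega : n c ≤ S.card)
  obtain ⟨B, hBT, hBcard⟩ := Finset.exists_subset_card_eq (by omega : n c ≤ T.card)
  set af : Fin (n c) → Fin a := fun j => (A.orderIsoOfFin hAcard j : Fin a) with haf
  set bf : Fin (n c) → Fin M₀ := fun j => (B.orderIsoOfFin hBcard j : Fin M₀) with hbf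
  have hafinj : Function.Injective af := fun x y h =>
    (A.orderIsoOfFin hAcard).injective (Subtype.ext h)
  have hbfinj : Function.Injective bf := fun x y h =>
    (B.orderIsoOfFin hBcard).injective (Subtype.ext h)
  have hafS : ∀ j, af j ∈ S := fun j => hAS (A.orderIsoOfFin hAcard j).2
  have hbfT : ∀ j, bf j ∈ T := fun j => hBT (B.orderIsoOfFin hBcard j).2
  set H := colorSubgraph (completeBipartiteGraph (Fin M₀) (Fin M₀)) χ c with hH
  have hadjall : ∀ x y : Fin (n c),
      H.Adj (Sum.inl (Fin.castLE ha (af x))) (Sum.inr (bf y)) := by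
    intro x y
    refine ⟨by simp, ?_⟩
    have hy := hbfT y
    have hPy : P (bf y) = (c, S) := (Finset.mem_filter.1 hy).2
    have := hPcol (bf y) (af x) (by rw [hPy]; exact hafS x)
    rw [hPy] at this
    exact this
  have hpos : 0 < n c := by omega
  set f : ℕ → Fin M₀ ⊕ Fin M₀ := fun k =>
    if k % 2 = 0 then Sum.inl (Fin.castLE ha (af ⟨k/2 % n c, Nat.mod_lt _ hpos⟩))
    else Sum.inr (bf ⟨k/2 % n c, Nat.mod_lt _ hpos⟩) with hf
  have hfeven : ∀ k, k % 2 = 0 →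
      f k = Sum.inl (Fin.castLE ha (af ⟨k/2 % n c, Nat.mod_lt _ hpos⟩)) := by
    intro k hk; simp [hf, hk]
  have hfodd : ∀ k, k % 2 = 1 →
      f k = Sum.inr (bf ⟨k/2 % n c, Nat.mod_lt _ hpos⟩) := by
    intro k hk; simp [hf, hk]
  have hinj : ∀ x < 2*(n c), ∀ y < 2*(n c), f x = f y → x = y := by
    intro x hx y hy hxy
    rcases Nat.even_or_odd x with hxe | hxo <;> rcases Nat.even_or_odd y with hye | hyo
    · rw [hfeven x (Nat.even_iff.1 hxe), hfeven y (Nat.even_iff.1 hye)] at hxy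
      have := hafinj (Fin.castLE_injective ha (Sum.inl.inj hxy))
      simp only [Fin.mk.injEq] at this
      have hx2 : x/2 % n c = y/2 % n c := this
      rw [Nat.mod_eq_of_lt (by omega), Nat.mod_eq_of_lt (by omega)] at hx2
      have := Nat.even_iff.1 hxe; have := Nat.even_iff.1 hye
      omega
    · rw [hfeven x (Nat.even_iff.1 hxe), hfodd y (Nat.odd_iff.1 hyo)] at hxy
      exact absurd hxy (by simp)
    · rw [hfodd x (Nat.odd_iff.1 hxo), hfeven y (Nat.even_iff.1 hye)] at hxy
      exact absurd hxy (by simp)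
    · rw [hfodd x (Nat.odd_iff.1 hxo), hfodd y (Nat.odd_iff.1 hyo)] at hxy
      have := hbfinj (Sum.inr.inj hxy)
      simp only [Fin.mk.injEq] at this
      have hx2 : x/2 % n c = y/2 % n c := this
      rw [Nat.mod_eq_of_lt (by omega), Nat.mod_eq_of_lt (by omega)] at hx2
      have := Nat.odd_iff.1 hxo; have := Nat.odd_iff.1 hyo
      omega
  have hadj : ∀ k, k + 1 < 2*(n c) → H.Adj (f k) (f (k+1)) := by
    intro k hk
    rcases Nat.even_or_odd k with hke | hko
    · have h0 := Nat.even_iff.1 hke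
      rw [hfeven k h0, hfodd (k+1) (by omega)]
      exact hadjall _ _
    · have h1 := Nat.odd_iff.1 hko
      rw [hfodd k h1, hfeven (k+1) (by omega)]
      exact (hadjall _ _).symm
  have hlast : H.Adj (f (2*(n c)-1)) (f 0) := by
    rw [hfodd (2*(n c)-1) (by omega), hfeven 0 (by omega)]
    exact (hadjall _ _).symm
  obtain ⟨w, hw, hwlen⟩ := cycle_of_fn hnc2 f hinj hadj hlast
  exact ⟨c, f 0, w, hw, hwlen⟩


/-- fibers of the first projection of a sigma type -/
def fiberEquiv {r : ℕ} (β : Fin r → Type*) (i : Fin r) :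
    {p : Σ j, β j // p.1 = i} ≃ β i where
  toFun := fun ⟨⟨j, x⟩, h⟩ => h ▸ x
  invFun := fun x => ⟨⟨i, x⟩, rfl⟩
  left_inv := by rintro ⟨⟨j, x⟩, rfl⟩; rfl
  right_inv := fun x => rfl

theorem br_cycles_lower_bound (r : ℕ) (hr : 1 ≤ r) (n : Fin r → ℕ) (hn : ∀ i, 2 ≤ n i)
    (N : ℕ) (hN : N = (∑ i, n i) - r) :
    (∃ χ : Sym2 (Fin N ⊕ Fin N) → Fin r, ∀ i : Fin r,
      ¬ HasCycleLength (colorSubgraph (completeBipartiteGraph (Fin N) (Fin N)) χ i)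
          (2 * n i)) ∧
    (∑ i, n i) - r + 1 ≤ brCycles r (fun i => 2 * n i) := by
  have hr' : 0 < r := hr
  have hsum : ∑ i, (n i - 1) = N := by
    have h1 : ∑ i, (n i - 1) + ∑ _i : Fin r, 1 = ∑ i, n i := by
      rw [← Finset.sum_add_distrib]
      exact Finset.sum_congr rfl (fun i _ => by have := hn i; omega)
    have h2 : ∑ _i : Fin r, (1:ℕ) = r := by simp
    omega
  have ecard : Fintype.card (Fin N) = Fintype.card (Σ i : Fin r, Fin (n i - 1)) := by
    rw [Fintype.card_sigma]
    simp [hsum]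
  set e : Fin N ≃ Σ i : Fin r, Fin (n i - 1) := Fintype.equivOfCardEq ecard with he
  set b : Fin N → Fin r := fun k => (e k).1 with hbdef
  have hb : ∀ i, (Finset.univ.filter (fun k => b k = i)).card ≤ n i - 1 := by
    intro i
    rw [← Fintype.card_subtype]
    have := Fintype.card_congr
      ((e.subtypeEquiv (fun k => Iff.rfl : ∀ k, b k = i ↔ (e k).1 = i)).trans
        (fiberEquiv (fun j => Fin (n j - 1)) i))
    rw [this, Fintype.card_fin]
  have hmain := no_mono_cycle hr' n hn N b hb
  refine ⟨hmain, ?_⟩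
  obtain ⟨M₀, hM₀⟩ := mono_cycle_exists hr' n hn
  rw [← hN]
  unfold brCycles
  refine le_csInf ⟨M₀, ?_⟩ ?_
  · exact hM₀
  intro M hM
  by_contra hlt
  push_neg at hlt
  have hMN : M ≤ N := by omega
  set b' : Fin M → Fin r := fun k => b (Fin.castLE hMN k) with hb'
  have hb'c : ∀ i, (Finset.univ.filter (fun k => b' k = i)).card ≤ n i - 1 := by
    intro i
    refine le_trans ?_ (hb i)
    apply Finset.card_le_card_of_injOn (Fin.castLE hMN)
    · intro k hk
      simp only [Finset.coe_filter, Finset.mem_coe, Finset.mem_filter, Finset.mem_univ, true_and, Set.mem_setOf_eq] at hk ⊢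
      exact hk
    · intro x _ y _ h
      exact Fin.castLE_injective hMN h
  obtain ⟨χ, hχ⟩ := no_mono_cycle hr' n hn M b' hb'c
  obtain ⟨i, hi⟩ := hM χ
  exact hχ i hi
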